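/- Let X, Y be topological spaces with Y irreducible, and let f : X → Y be a map such that the image f(U) of every open set U is constructible (a finite union of locally closed sets) and dense-hitting: for every nonempty closed irreducible Z ⊆ Y meeting f(X), f(X) ∩ Z is dense in Z. If for every irreducible closed Z ⊆ Y and every open U ⊆ X with f(U) ∩ Z ≠ ∅ the intersection f(U) ∩ Z is dense in Z, then f(U) is open for every open U; i.e., a constructible set that is dense in every irreducible closed set it meets, is open. -/

import Mathlib

/-- A constructible set: a finite union of locally closed sets. -/
def IsConstructibleSet {Y : Type*} [TopologicalSpace Y] (S : Set Y) : Prop :=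
  ∃ (n : ℕ) (U C : Fin n → Set Y), (∀ i, IsOpen (U i)) ∧ (∀ i, IsClosed (C i)) ∧
    S = ⋃ i, U i ∩ C i

section Aux

variable {Y : Type*} [TopologicalSpace Y]

lemma IsConstructibleSet.inter {S T : Set Y} (hS : IsConstructibleSet S)
    (hT : IsConstructibleSet T) : IsConstructibleSet (S ∩ T) := by
  obtain ⟨n, U, C, hU, hC, rfl⟩ := hS
  obtain ⟨m, V, D, hV, hD, rfl⟩ := hT
  refine ⟨m * n, fun k => U (finProdFinEquiv.symm k).2 ∩ V (finProdFinEquiv.symm k).1,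
    fun k => C (finProdFinEquiv.symm k).2 ∩ D (finProdFinEquiv.symm k).1,
    fun k => (hU _).inter (hV _), fun k => (hC _).inter (hD _), ?_⟩
  ext x
  simp only [Set.mem_inter_iff, Set.mem_iUnion]
  constructor
  · rintro ⟨⟨i, hi⟩, ⟨j, hj⟩⟩
    refine ⟨finProdFinEquiv (j, i), ?_⟩
    simp only [Equiv.symm_apply_apply]
    exact ⟨⟨hi.1, hj.1⟩, hi.2, hj.2⟩
  · rintro ⟨k, ⟨⟨h1, h2⟩, h3, h4⟩⟩
    exact ⟨⟨_, h1, h3⟩, ⟨_, h2, h4⟩⟩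

lemma IsConstructibleSet.compl {S : Set Y} (hS : IsConstructibleSet S) :
    IsConstructibleSet Sᶜ := by
  obtain ⟨n, U, C, hU, hC, rfl⟩ := hS
  induction n with
  | zero =>
    simp only [Set.iUnion_of_empty, Set.compl_empty]
    exact ⟨1, fun _ => Set.univ, fun _ => Set.univ, fun _ => isOpen_univ,
      fun _ => isClosed_univ, by ext x; simp⟩
  | succ n ih =>
    have hsplit : (⋃ i : Fin (n + 1), U i ∩ C i) =
        (U 0 ∩ C 0) ∪ ⋃ i : Fin n, U i.succ ∩ C i.succ := by
      ext x
      simp only [Set.mem_iUnion, Set.mem_union]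
      exact Fin.exists_fin_succ
    rw [hsplit, Set.compl_union]
    refine IsConstructibleSet.inter ?_ (ih _ _ (fun i => hU _) (fun i => hC _))
    rw [Set.compl_inter]
    refine ⟨2, ![Set.univ, (C 0)ᶜ], ![(U 0)ᶜ, Set.univ], ?_, ?_, ?_⟩
    · intro i
      fin_cases i
      · exact isOpen_univ
      · exact (hC 0).isOpen_compl
    · intro i
      fin_cases i
      · exact isClosed_compl_iff.mpr (hU 0)
      · exact isClosed_univ
    · ext x
      simp only [Set.mem_union, Set.mem_iUnion]
      constructor
      · rintro (h | h)
        · exact ⟨0, by simp [h]⟩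
        · exact ⟨1, by simp [h]⟩
      · rintro ⟨i, hi⟩
        fin_cases i
        · simp only [Matrix.cons_val_zero, Set.mem_inter_iff] at hi
          exact Or.inl hi.2
        · simp only [Matrix.cons_val_one, Matrix.head_cons, Set.mem_inter_iff] at hi
          exact Or.inr hi.1

/-- The generic point of an irreducible closed set belongs to any constructible set
which is dense in it. -/
lemma generic_mem_of_dense {S : Set Y} (hS : IsConstructibleSet S) (ξ : Y)
    (hdense : closure {ξ} ⊆ closure (S ∩ closure {ξ})) : ξ ∈ S := by
  obtain ⟨n, U, C, hU, hC, rfl⟩ := hS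
  set Z : Set Y := closure {ξ} with hZ
  have hsub : Z ⊆ ⋃ i, closure (U i ∩ C i ∩ Z) := by
    refine hdense.trans ?_
    refine closure_minimal ?_ (isClosed_iUnion_of_finite fun i => isClosed_closure)
    rw [Set.iUnion_inter]
    exact Set.iUnion_mono fun i => subset_closure
  have hξZ : ξ ∈ Z := subset_closure rfl
  obtain ⟨i, hi⟩ := Set.mem_iUnion.mp (hsub hξZ)
  have hCi : ξ ∈ C i :=
    (closure_minimal (fun x hx => hx.1.2) (hC i)) hi
  have hne : (U i ∩ C i ∩ Z).Nonempty := by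
    by_contra h
    rw [Set.not_nonempty_iff_eq_empty] at h
    rw [h, closure_empty] at hi
    exact hi
  obtain ⟨z, hz⟩ := hne
  have hξU : ξ ∈ U i := by
    obtain ⟨w, hwU, hw⟩ := mem_closure_iff.mp hz.2 (U i) (hU i) hz.1.1
    rwa [Set.mem_singleton_iff.mp hw] at hwU
  exact Set.mem_iUnion.mpr ⟨i, hξU, hCi⟩

lemma constructible_dense_isOpen [TopologicalSpace.NoetherianSpace Y] [QuasiSober Y]
    {S : Set Y} (hS : IsConstructibleSet S)
    (hd : ∀ Z : Set Y, IsClosed Z → IsIrreducible Z → (S ∩ Z).Nonempty →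
      Z ⊆ closure (S ∩ Z)) : IsOpen S := by
  -- S is stable under generization
  have hgen : ∀ x ∈ S, ∀ y : Y, x ∈ closure ({y} : Set Y) → y ∈ S := by
    intro x hx y hxy
    exact generic_mem_of_dense hS y
      (hd _ isClosed_closure isIrreducible_singleton.closure ⟨x, hx, hxy⟩)
  set T : Set Y := Sᶜ with hT
  have hTc : IsConstructibleSet T := hS.compl
  -- by Noetherian induction: for every closed W, closure (T ∩ W) ⊆ T
  have key : ∀ W : TopologicalSpace.Closeds Y, closure (T ∩ W) ⊆ T := by
    intro W
    induction W using WellFoundedLT.induction with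
    | ind W ih =>
      by_cases hWe : ((W : Set Y)).Nonempty
      case neg =>
        rw [Set.not_nonempty_iff_eq_empty] at hWe
        simp [hWe]
      set W₀ : Set Y := closure (T ∩ W) with hW₀
      have hW₀c : IsClosed W₀ := isClosed_closure
      have hW₀sub : W₀ ⊆ W := closure_minimal Set.inter_subset_right W.isClosed
      by_cases hlt : (⟨W₀, hW₀c⟩ : TopologicalSpace.Closeds Y) < W
      · -- strict: use induction hypothesis
        have hsub' : T ∩ (W : Set Y) ⊆ T ∩ W₀ := fun x hx => ⟨hx.1, subset_closure hx⟩
        exact (closure_mono hsub').trans (ih _ hlt)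
      · -- W₀ = W, i.e. T ∩ W is dense in W
        have hle : (⟨W₀, hW₀c⟩ : TopologicalSpace.Closeds Y) ≤ W := hW₀sub
        have hW₀eq : W₀ = (W : Set Y) := by
          rcases hle.lt_or_eq with h | h
          · exact absurd h hlt
          · exact congrArg (fun s : TopologicalSpace.Closeds Y => (s : Set Y)) h
        by_cases hirr : IsIrreducible (W : Set Y)
        · obtain ⟨ξ, hξ⟩ := QuasiSober.sober hirr W.isClosed
          have hZ : closure ({ξ} : Set Y) = W := hξ
          have hξT : ξ ∈ T := by
            apply generic_mem_of_dense hTc ξ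
            rw [hZ]
            exact subset_of_eq (hW₀eq.symm.trans hW₀)
          intro x hx
          have hxW : x ∈ (W : Set Y) := hW₀eq ▸ hx
          by_contra hxT
          have hxS : x ∈ S := by simpa [hT] using hxT
          exact hξT (hgen x hxS ξ (by rw [hZ]; exact hxW))
        · -- reducible nonempty case: decompose
          have hnpre : ¬ IsPreirreducible (W : Set Y) := fun h => hirr ⟨hWe, h⟩
          rw [isPreirreducible_iff_isClosed_union_isClosed] at hnpre
          push_neg at hnpre
          obtain ⟨Z₁, Z₂, hZ₁, hZ₂, hsub, h1, h2⟩ := hnpre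
          have hlt1 : (⟨(W : Set Y) ∩ Z₁, W.isClosed.inter hZ₁⟩ :
              TopologicalSpace.Closeds Y) < W := by
            refine lt_of_le_of_ne (fun x hx => hx.1) (fun h => h1 ?_)
            have hWZ : (W : Set Y) ∩ Z₁ = (W : Set Y) :=
              congrArg (fun s : TopologicalSpace.Closeds Y => (s : Set Y)) h
            intro x hx
            have : x ∈ (W : Set Y) ∩ Z₁ := by rw [hWZ]; exact hx
            exact this.2
          have hlt2 : (⟨(W : Set Y) ∩ Z₂, W.isClosed.inter hZ₂⟩ :
              TopologicalSpace.Closeds Y) < W := by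
            refine lt_of_le_of_ne (fun x hx => hx.1) (fun h => h2 ?_)
            have hWZ : (W : Set Y) ∩ Z₂ = (W : Set Y) :=
              congrArg (fun s : TopologicalSpace.Closeds Y => (s : Set Y)) h
            intro x hx
            have : x ∈ (W : Set Y) ∩ Z₂ := by rw [hWZ]; exact hx
            exact this.2
          have hdecomp : T ∩ W ⊆ (T ∩ ((W : Set Y) ∩ Z₁)) ∪ (T ∩ ((W : Set Y) ∩ Z₂)) := by
            rintro x ⟨hxT, hxW⟩
            rcases hsub hxW with h | h
            · exact Or.inl ⟨hxT, hxW, h⟩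
            · exact Or.inr ⟨hxT, hxW, h⟩
          calc closure (T ∩ W)
              ⊆ closure ((T ∩ ((W : Set Y) ∩ Z₁)) ∪ (T ∩ ((W : Set Y) ∩ Z₂))) :=
                closure_mono hdecomp
            _ = closure (T ∩ ((W : Set Y) ∩ Z₁)) ∪ closure (T ∩ ((W : Set Y) ∩ Z₂)) :=
                closure_union
            _ ⊆ T := Set.union_subset (ih _ hlt1) (ih _ hlt2)
  have hTclosed : IsClosed T := by
    rw [← closure_subset_iff_isClosed]
    have := key ⊤
    simpa using this
  simpa [hT] using hTclosed.isOpen_compl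

end Aux

/-- if images of opens under f are constructible and meet every irreducible
closed set they touch densely, then images of opens are open; equivalently, a
constructible set that is dense in every irreducible closed set it meets is open. -/
theorem constructible_dense_in_irreducible_closed_is_open
    {X Y : Type*} [TopologicalSpace X] [TopologicalSpace Y]
    [IrreducibleSpace Y] [TopologicalSpace.NoetherianSpace Y] [QuasiSober Y]
    (f : X → Y)
    (hc : ∀ U : Set X, IsOpen U → IsConstructibleSet (f '' U))
    (hd : ∀ Z : Set Y, IsClosed Z → IsIrreducible Z → ∀ U : Set X, IsOpen U →
      (f '' U ∩ Z).Nonempty → Z ⊆ closure (f '' U ∩ Z)) :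
    (∀ U : Set X, IsOpen U → IsOpen (f '' U)) ∧
    (∀ S : Set Y, IsConstructibleSet S →
      (∀ Z : Set Y, IsClosed Z → IsIrreducible Z → (S ∩ Z).Nonempty →
        Z ⊆ closure (S ∩ Z)) → IsOpen S) := by
  constructor
  · intro U hU
    exact constructible_dense_isOpen (hc U hU)
      (fun Z hZc hZi hne => hd Z hZc hZi U hU hne)
  · intro S hS hdS
    exact constructible_dense_isOpen hS hdS
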